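/- Let 1 ≤ p < ∞ and t ∈ [0,1), and regard C_t as a bounded linear operator on ℓ^p. Then C_t is not supercyclic: there is no x ∈ ℓ^p such that the projective orbit {λ · C_t^n x : λ ∈ ℂ, n ∈ ℕ₀} is dense in ℓ^p. -/

import Mathlib

open scoped ENNReal

set_option maxHeartbeats 1000000

/-- Let `1 ≤ p < ∞` and `t ∈ [0,1)`, and let `C` be the generalized Cesàro operator
`C_t` on `ℓ^p` (given by its coordinate formula). Then `C` is not supercyclic:
there is no `x ∈ ℓ^p` whose projective orbit `{λ · Cⁿ x : λ ∈ ℂ, n ∈ ℕ}` is dense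
in `ℓ^p`. -/
theorem genCesaro_not_supercyclic_lp (p : ℝ≥0∞) [Fact (1 ≤ p)] (hp : p ≠ ⊤)
    (t : ℝ) (ht : t ∈ Set.Ico (0 : ℝ) 1)
    (C : lp (fun _ : ℕ => ℂ) p →L[ℂ] lp (fun _ : ℕ => ℂ) p)
    (hC : ∀ (x : lp (fun _ : ℕ => ℂ) p) (n : ℕ),
      (C x : ℕ → ℂ) n =
        (1 / ((n : ℂ) + 1)) * ∑ i ∈ Finset.range (n + 1), (t : ℂ) ^ (n - i) * (x : ℕ → ℂ) i) :
    ¬ ∃ x : lp (fun _ : ℕ => ℂ) p,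
      Dense {y : lp (fun _ : ℕ => ℂ) p | ∃ (c : ℂ) (n : ℕ), y = c • (C ^ n) x} := by
  obtain ⟨ht0, ht1⟩ := ht
  rintro ⟨x, hD⟩
  have hp0 : p ≠ 0 := by
    have h1 := (Fact.out : (1:ℝ≥0∞) ≤ p)
    intro h; rw [h] at h1; simp at h1
  -- coordinate formulas
  have hc0 : ∀ z : lp (fun _ : ℕ => ℂ) p, (C z : ℕ → ℂ) 0 = (z : ℕ → ℂ) 0 := by
    intro z; rw [hC]; simp
  have hc1 : ∀ z : lp (fun _ : ℕ => ℂ) p,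
      (C z : ℕ → ℂ) 1 = (1/2) * ((t:ℂ) * (z : ℕ → ℂ) 0 + (z : ℕ → ℂ) 1) := by
    intro z
    rw [hC, Finset.sum_range_succ, Finset.sum_range_succ, Finset.sum_range_zero]
    norm_num
  set φ : lp (fun _ : ℕ => ℂ) p → ℂ := fun z => (z : ℕ → ℂ) 1 - (t:ℂ) * (z : ℕ → ℂ) 0 with hφ
  have hφC : ∀ z, φ (C z) = (1/2) * φ z := by
    intro z; simp only [hφ, hc0, hc1]; ring
  have hpow0 : ∀ n : ℕ, ((C ^ n) x : ℕ → ℂ) 0 = (x : ℕ → ℂ) 0 := by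
    intro n
    induction n with
    | zero => simp
    | succ n ih =>
      rw [pow_succ', ContinuousLinearMap.mul_apply, hc0, ih]
  have hpowφ : ∀ n : ℕ, φ ((C ^ n) x) = (1/2 : ℂ) ^ n * φ x := by
    intro n
    induction n with
    | zero => simp
    | succ n ih =>
      rw [pow_succ', ContinuousLinearMap.mul_apply, hφC, ih, pow_succ]; ring
  -- orbit coordinates
  have horb : ∀ (c : ℂ) (n : ℕ),
      ((c • (C ^ n) x : lp (fun _ : ℕ => ℂ) p) : ℕ → ℂ) 0 = c * (x : ℕ → ℂ) 0 ∧
      φ (c • (C ^ n) x) = c * ((1/2 : ℂ) ^ n * φ x) := by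
    intro c n
    have hs : ((c • (C ^ n) x : lp (fun _ : ℕ => ℂ) p) : ℕ → ℂ) = c • ((C ^ n) x : ℕ → ℂ) :=
      lp.coeFn_smul c _
    constructor
    · rw [hs, Pi.smul_apply, smul_eq_mul, hpow0 n]
    · simp only [hφ, hs, Pi.smul_apply, smul_eq_mul]
      have h0 := hpow0 n
      have h1 : (((C ^ n) x : ℕ → ℂ) 1 - (t:ℂ) * ((C ^ n) x : ℕ → ℂ) 0) = (1/2:ℂ)^n * φ x :=
        hpowφ n
      have : ((C ^ n) x : ℕ → ℂ) 1 = (1/2:ℂ)^n * φ x + (t:ℂ) * (x : ℕ → ℂ) 0 := by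
        rw [← h0]; linear_combination h1
      rw [this, h0]; ring
  -- coordinate estimates
  have key0 : ∀ y e : lp (fun _ : ℕ => ℂ) p,
      ‖(y : ℕ → ℂ) 0 - (e : ℕ → ℂ) 0‖ ≤ ‖y - e‖ := by
    intro y e
    have := lp.norm_apply_le_norm hp0 (y - e) 0
    rwa [lp.coeFn_sub, Pi.sub_apply] at this
  have key1 : ∀ y e : lp (fun _ : ℕ => ℂ) p,
      ‖φ y - φ e‖ ≤ (1 + t) * ‖y - e‖ := by
    intro y e
    have h1 : ‖(y : ℕ → ℂ) 1 - (e : ℕ → ℂ) 1‖ ≤ ‖y - e‖ := by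
      have := lp.norm_apply_le_norm hp0 (y - e) 1
      rwa [lp.coeFn_sub, Pi.sub_apply] at this
    have h0 := key0 y e
    have heq : φ y - φ e =
        ((y : ℕ → ℂ) 1 - (e : ℕ → ℂ) 1) - (t:ℂ) * ((y : ℕ → ℂ) 0 - (e : ℕ → ℂ) 0) := by
      simp only [hφ]; ring
    calc ‖φ y - φ e‖ ≤ ‖(y : ℕ → ℂ) 1 - (e : ℕ → ℂ) 1‖ +
          ‖(t:ℂ) * ((y : ℕ → ℂ) 0 - (e : ℕ → ℂ) 0)‖ := by
          rw [heq]; exact norm_sub_le _ _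
      _ ≤ ‖y - e‖ + t * ‖y - e‖ := by
          rw [norm_mul, Complex.norm_real, Real.norm_of_nonneg ht0]
          exact add_le_add h1 (by
            exact mul_le_mul_of_nonneg_left h0 ht0)
      _ = (1 + t) * ‖y - e‖ := by ring
  clear_value φ
  set a : ℂ := (x : ℕ → ℂ) 0 with ha
  set b : ℂ := φ x with hb
  clear_value a b
  clear hpow0 hpowφ hφC hc0 hc1 hC
  by_cases haz : a = 0
  · set e : lp (fun _ : ℕ => ℂ) p := lp.single p 0 1 with he
    obtain ⟨y, ⟨c, n, hy_eq⟩, hy⟩ := hD.exists_dist_lt e (ε := 1/2) (by norm_num)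
    have h0 : (y : ℕ → ℂ) 0 = c * a := by rw [hy_eq]; exact (horb c n).1
    rw [haz, mul_zero] at h0
    have he0 : (e : ℕ → ℂ) 0 = 1 := lp.single_apply_self p 0 1
    have hk := key0 y e
    rw [h0, he0] at hk
    simp only [zero_sub, norm_neg, norm_one] at hk
    rw [dist_comm, dist_eq_norm] at hy
    linarith
  by_cases hbz : b = 0
  · set e : lp (fun _ : ℕ => ℂ) p := lp.single p 1 1 with he
    obtain ⟨y, ⟨c, n, hy_eq⟩, hy⟩ := hD.exists_dist_lt e (ε := 1/2) (by norm_num)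
    have h1 : φ y = c * ((1/2 : ℂ) ^ n * b) := by rw [hy_eq]; exact (horb c n).2
    rw [hbz, mul_zero, mul_zero] at h1
    have heφ : φ e = 1 := by
      simp only [hφ]
      rw [he, lp.single_apply_self, lp.single_apply_ne p 1 _ (by norm_num : (0:ℕ) ≠ 1)]
      ring
    have hk := key1 y e
    rw [h1, heφ] at hk
    simp only [zero_sub, norm_neg, norm_one] at hk
    rw [dist_comm, dist_eq_norm] at hy
    nlinarith [norm_nonneg (y - e)]
  · set r : ℂ := b / a with hr
    have hrz : r ≠ 0 := div_ne_zero hbz haz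
    have hrpos : 0 < ‖r‖ := norm_pos_iff.mpr hrz
    set e : lp (fun _ : ℕ => ℂ) p := lp.single p 0 1 + lp.single p 1 (2 * r + t) with he
    have he0 : (e : ℕ → ℂ) 0 = 1 := by
      rw [he, lp.coeFn_add, Pi.add_apply, lp.single_apply_self,
        lp.single_apply_ne p 1 _ (by norm_num : (0:ℕ) ≠ 1)]
      ring
    have he1 : (e : ℕ → ℂ) 1 = 2 * r + t := by
      rw [he, lp.coeFn_add, Pi.add_apply, lp.single_apply_self,
        lp.single_apply_ne p 0 _ (by norm_num : (1:ℕ) ≠ 0)]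
      ring
    have heφ : φ e = 2 * r := by simp only [hφ, he0, he1]; ring
    clear_value r e
    have hεpos : (0:ℝ) < min (1/2) (‖r‖ / 4) := lt_min (by norm_num) (by linarith)
    obtain ⟨y, ⟨c, n, hy_eq⟩, hy⟩ := hD.exists_dist_lt e hεpos
    rw [dist_comm, dist_eq_norm] at hy
    have hy1 : ‖y - e‖ < 1/2 := lt_of_lt_of_le hy (min_le_left _ _)
    have hy2 : ‖y - e‖ < ‖r‖ / 4 := lt_of_lt_of_le hy (min_le_right _ _)
    have h0 : (y : ℕ → ℂ) 0 = c * a := by rw [hy_eq]; exact (horb c n).1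
    have h1 : φ y = c * ((1/2 : ℂ) ^ n * b) := by rw [hy_eq]; exact (horb c n).2
    have hk0 := key0 y e
    rw [h0, he0] at hk0
    have hca : ‖c * a‖ < 3/2 := by
      have h2 : ‖c * a - 1‖ < 1/2 := lt_of_le_of_lt hk0 hy1
      have h4 : ‖c * a‖ ≤ ‖c * a - 1‖ + 1 := by
        simpa using norm_add_le (c * a - 1) 1
      linarith
    have hφy : φ y = (c * a) * ((1/2 : ℂ) ^ n * r) := by
      rw [h1, hr]; field_simp
    have hφybound : ‖φ y‖ ≤ 3/2 * ‖r‖ := by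
      have hA : ‖(1/2 : ℂ) ^ n * r‖ ≤ ‖r‖ := by
        rw [norm_mul, norm_pow]
        have h12 : ‖(1/2 : ℂ)‖ = 1/2 := by
          rw [norm_div, norm_one]
          have : ‖(2:ℂ)‖ = 2 := by simp
          rw [this]
        rw [h12]
        have hle1 : ((1:ℝ)/2) ^ n ≤ 1 := pow_le_one₀ (by norm_num) (by norm_num)
        nlinarith
      have hnorm : ‖φ y‖ = ‖c * a‖ * ‖(1/2 : ℂ) ^ n * r‖ := by rw [hφy, norm_mul]
      rw [hnorm]
      nlinarith [norm_nonneg (c * a), norm_nonneg ((1/2 : ℂ) ^ n * r)]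
    have hk1 := key1 y e
    rw [heφ] at hk1
    have h2r : ‖(2 : ℂ) * r‖ = 2 * ‖r‖ := by
      rw [norm_mul]
      have : ‖(2:ℂ)‖ = 2 := by simp
      rw [this]
    have hlow : ‖r‖ / 2 ≤ ‖φ y - 2 * r‖ := by
      have h3 := norm_sub_norm_le ((2:ℂ) * r) (φ y)
      have h3' : ‖(2:ℂ) * r - φ y‖ = ‖φ y - 2 * r‖ := norm_sub_rev _ _
      rw [h3', h2r] at h3
      linarith
    have hup : ‖φ y - 2 * r‖ < ‖r‖ / 2 := by
      have hne : (0:ℝ) ≤ ‖y - e‖ := norm_nonneg _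
      have hstep : (1 + t) * ‖y - e‖ < 2 * (‖r‖ / 4) := by nlinarith
      linarith
    linarith
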